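/- Let M be an (n,r)-matroid and let H ⊆ {1,…,n} be simultaneously a circuit and a hyperplane of M, and let M′ be the relaxation of M at H (the matroid whose bases are the bases of M together with H). Then G(M′) − G(M) = r!(n−r)!·([1^r 0^{n−r}] − [1^{r−1} 0 1 0^{n−r−1}]) in G(n,r), and T(M′;x,y) − T(M;x,y) = x + y − xy in K[x,y]. -/

import Mathlib

open MvPolynomial
open scoped Classical

/-- The dominance order on bit sequences: `Dominates s t` means `s ⊵ t`, i.e. every
prefix of `s` has at least as many `1`s (`true`s) as the corresponding prefix of `t`. -/
def Dominates (s t : List Bool) : Prop :=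
  ∀ j : ℕ, (t.take j).count true ≤ (s.take j).count true

/-- The indicator bit sequence of a subset `B` of `{1,…,n}` (modelled as `Fin n`). -/
def indList {n : ℕ} (B : Finset (Fin n)) : List Bool :=
  List.ofFn fun i : Fin n => decide (i ∈ B)

/-- The finset of `(n,r)`-sequences: bit sequences of length `n` with exactly `r` ones. -/
def seqs (n r : ℕ) : Finset (List Bool) :=
  ((Finset.univ : Finset (Fin n → Bool)).image List.ofFn).filter fun l => l.count true = r

/-- The Tutte polynomial determined by a rank function `rk` on subsets of an `n`-element
ground set, where `r` is the rank of the whole ground set.  The variable `X 0` plays the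
role of `x` and `X 1` plays the role of `y`. -/
noncomputable def tutte (K : Type*) [Field K] {n : ℕ} (r : ℕ) (rk : Finset (Fin n) → ℕ) :
    MvPolynomial (Fin 2) K :=
  ∑ A : Finset (Fin n), (X 0 - 1) ^ (r - rk A) * (X 1 - 1) ^ (A.card - rk A)

/-- `B` is a basis of the freedom matroid `F(s)`: it has `wt s` elements and its
indicator sequence is dominated by `s`. -/
def IsFreedomBasis (s : List Bool) (B : Finset (Fin s.length)) : Prop :=
  B.card = s.count true ∧ Dominates s (indList B)

/-- The rank function of the freedom matroid `F(s)`: the rank of a set is the largest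
size of its intersection with a basis. -/
noncomputable def freedomRk (s : List Bool) (A : Finset (Fin s.length)) : ℕ :=
  (Finset.univ.filter fun B => IsFreedomBasis s B).sup fun B => (A ∩ B).card

/-- The Tutte polynomial of the freedom matroid `F(s)`. -/
noncomputable def freedomTutte (K : Type*) [Field K] (s : List Bool) :
    MvPolynomial (Fin 2) K :=
  tutte K (s.count true) (freedomRk s)

/-- The rank of a set in a matroid: the largest cardinality of an independent subset. -/
noncomputable def mrank {n : ℕ} (M : Matroid (Fin n)) (A : Set (Fin n)) : ℕ :=
  (Finset.univ.filter fun I : Finset (Fin n) =>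
    M.Indep ↑I ∧ (↑I : Set (Fin n)) ⊆ A).sup Finset.card

/-- The set `{π(1),…,π(m)}` of the first `m` values of a permutation. -/
def prefFinset {n : ℕ} (π : Equiv.Perm (Fin n)) (m : ℕ) : Finset (Fin n) :=
  (Finset.univ.filter fun i : Fin n => (i : ℕ) < m).image π

/-- The rank sequence of a permutation `π` with respect to a rank function `rk`:
its `j`-th entry is `1` (`true`) exactly when `rk {π(1),…,π(j)} = rk {π(1),…,π(j-1)} + 1`. -/
def rankSeq {n : ℕ} (rk : Finset (Fin n) → ℕ) (π : Equiv.Perm (Fin n)) : List Bool :=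
  List.ofFn fun j : Fin n =>
    decide (rk (prefFinset π ((j : ℕ) + 1)) = rk (prefFinset π (j : ℕ)) + 1)

/-- `gCoeff rk l` is the number of permutations of the ground set whose rank sequence
is the bit sequence `l`; these are the coefficients of the `G`-invariant. -/
noncomputable def gCoeff {n : ℕ} (rk : Finset (Fin n) → ℕ) (l : List Bool) : ℕ :=
  (Finset.univ.filter fun π : Equiv.Perm (Fin n) => rankSeq rk π = l).card

/-- The `G`-invariant, as an element of the free `K`-module on all bit sequences. -/
noncomputable def Ginv (K : Type*) [Field K] {n : ℕ} (rk : Finset (Fin n) → ℕ) :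
    List Bool →₀ K :=
  ∑ π : Equiv.Perm (Fin n), Finsupp.single (rankSeq rk π) 1

/-- The value of the specialization `Sp` on the symbol `[l]`. -/
noncomputable def spPoly (K : Type*) [Field K] (l : List Bool) : MvPolynomial (Fin 2) K :=
  ∑ m ∈ Finset.range (l.length + 1),
    ((m.factorial * (l.length - m).factorial : ℕ) : K)⁻¹ •
      ((X 0 - 1) ^ (l.count true - (l.take m).count true) *
        (X 1 - 1) ^ (m - (l.take m).count true))

/-- The specialization `Sp` as a linear map on the free module on bit-sequence symbols. -/
noncomputable def SpMap (K : Type*) [Field K] :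
    (List Bool →₀ K) →ₗ[K] MvPolynomial (Fin 2) K :=
  Finsupp.linearCombination K (spPoly K)

/-- `G(n,r)`: the span of the `(n,r)`-sequence symbols, a subspace of dimension
`binomial(n,r)` of the free module on all bit sequences. -/
noncomputable def Gspace (K : Type*) [Field K] (n r : ℕ) : Submodule K (List Bool →₀ K) :=
  Submodule.span K ((fun l => Finsupp.single l (1 : K)) '' ↑(seqs n r))

/-- `T(n,r)`: the span of the Tutte polynomials of all `(n,r)`-matroids. -/
noncomputable def Tspace (K : Type*) [Field K] (n r : ℕ) :
    Submodule K (MvPolynomial (Fin 2) K) :=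
  Submodule.span K {p | ∃ M : Matroid (Fin n), M.E = Set.univ ∧ mrank M Set.univ = r ∧
    p = tutte K r fun A : Finset (Fin n) => mrank M ↑A}

/-- The bit sequence `0^a 1^b 0^c 1^d` associated to a quadruple `(a,b,c,d)`;
such sequences are the join-irreducible ones. -/
def joinList (q : ℕ × ℕ × ℕ × ℕ) : List Bool :=
  List.replicate q.1 false ++ List.replicate q.2.1 true ++
    List.replicate q.2.2.1 false ++ List.replicate q.2.2.2 true

/-- The bit sequence `1^a 0^b 1^c 0^d` associated to a quadruple `(a,b,c,d)`;
such sequences are the meet-irreducible ones. -/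
def meetList (q : ℕ × ℕ × ℕ × ℕ) : List Bool :=
  List.replicate q.1 true ++ List.replicate q.2.1 false ++
    List.replicate q.2.2.1 true ++ List.replicate q.2.2.2 false

/-- Quadruples `(a,b,c,d)` with `a+b+c+d = n` and `b+d = r`, indexing the
join-irreducible `(n,r)`-sequences `0^a 1^b 0^c 1^d`. -/
def joinIdx (n r : ℕ) : Type :=
  {q : ℕ × ℕ × ℕ × ℕ // q.1 + q.2.1 + q.2.2.1 + q.2.2.2 = n ∧ q.2.1 + q.2.2.2 = r}

/-- Quadruples `(a,b,c,d)` with `a+b+c+d = n` and `a+c = r`, indexing the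
meet-irreducible `(n,r)`-sequences `1^a 0^b 1^c 0^d`. -/
def meetIdx (n r : ℕ) : Type :=
  {q : ℕ × ℕ × ℕ × ℕ // q.1 + q.2.1 + q.2.2.1 + q.2.2.2 = n ∧ q.1 + q.2.2.1 = r}

/-- `f(u) = T(F(u); 1, y)`. -/
noncomputable def fEval (K : Type*) [Field K] (u : List Bool) : MvPolynomial (Fin 2) K :=
  MvPolynomial.aeval (fun i : Fin 2 => if i = 0 then 1 else X 1) (freedomTutte K u)

/-- `g(u) = T(F(u); x, 1)`. -/
noncomputable def gEval (K : Type*) [Field K] (u : List Bool) : MvPolynomial (Fin 2) K :=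
  MvPolynomial.aeval (fun i : Fin 2 => if i = 0 then X 0 else 1) (freedomTutte K u)

/-- `τ(u) = T(F(u); 1, 1)`. -/
noncomputable def tauEval (K : Type*) [Field K] (u : List Bool) : MvPolynomial (Fin 2) K :=
  MvPolynomial.aeval (fun _ : Fin 2 => (1 : MvPolynomial (Fin 2) K)) (freedomTutte K u)



lemma indep_card_le_mrank {n : ℕ} {M : Matroid (Fin n)} {I : Finset (Fin n)} {A : Set (Fin n)}
    (h1 : M.Indep ↑I) (h2 : (↑I : Set (Fin n)) ⊆ A) : I.card ≤ mrank M A :=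
  Finset.le_sup (by simp [h1, h2])

lemma exists_mrank_witness {n : ℕ} (M : Matroid (Fin n)) (A : Set (Fin n)) :
    ∃ I : Finset (Fin n), M.Indep ↑I ∧ (↑I : Set (Fin n)) ⊆ A ∧ I.card = mrank M A := by
  have hne : (Finset.univ.filter fun I : Finset (Fin n) =>
      M.Indep ↑I ∧ (↑I : Set (Fin n)) ⊆ A).Nonempty := ⟨∅, by simp⟩
  obtain ⟨I, hI, hIc⟩ := Finset.exists_mem_eq_sup _ hne Finset.card
  simp only [Finset.mem_filter, Finset.mem_univ, true_and] at hI
  exact ⟨I, hI.1, hI.2, hIc.symm⟩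

lemma mrank_mono {n : ℕ} (M : Matroid (Fin n)) {A B : Set (Fin n)} (h : A ⊆ B) :
    mrank M A ≤ mrank M B := by
  apply Finset.sup_le
  intro I hI
  simp only [Finset.mem_filter, Finset.mem_univ, true_and] at hI
  exact indep_card_le_mrank hI.1 (hI.2.trans h)

lemma mrank_coe_le_card {n : ℕ} (M : Matroid (Fin n)) (A : Finset (Fin n)) :
    mrank M ↑A ≤ A.card := by
  apply Finset.sup_le
  intro I hI
  simp only [Finset.mem_filter, Finset.mem_univ, true_and] at hI
  exact Finset.card_le_card (by exact_mod_cast hI.2)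

structure Setup (n r : ℕ) (M M' : Matroid (Fin n)) (H : Set (Fin n)) : Prop where
  hE : M.E = Set.univ
  hr : mrank M Set.univ = r
  hcirc : Minimal M.Dep H
  hflat : M.IsFlat H
  hhyp : mrank M H = r - 1
  hE' : M'.E = Set.univ
  hbase : ∀ B : Set (Fin n), M'.IsBase B ↔ M.IsBase B ∨ B = H

namespace Setup

variable {n r : ℕ} {M M' : Matroid (Fin n)} {H : Set (Fin n)} (S : Setup n r M M' H)
include S

lemma base_encard {B : Set (Fin n)} (hB : M.IsBase B) : B.encard = r := by
  have hBfin : B.Finite := Set.toFinite B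
  have h1 : B.toFinset.card ≤ r := by
    rw [← S.hr]
    exact indep_card_le_mrank (by rw [Set.coe_toFinset]; exact hB.indep)
      (by rw [Set.coe_toFinset]; exact Set.subset_univ B)
  obtain ⟨I, hI, -, hIr⟩ := exists_mrank_witness M Set.univ
  obtain ⟨B₂, hB₂, hIB₂⟩ := Matroid.indep_iff.mp hI
  have hcc : B₂.encard = B.encard := hB₂.encard_eq_encard_of_isBase hB
  have h2 : (r : ℕ∞) ≤ B.encard := by
    rw [← hcc, ← S.hr, ← hIr, ← Set.encard_coe_eq_coe_finsetCard I]
    exact Set.encard_le_encard hIB₂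
  rw [Set.encard_eq_coe_toFinset_card] at h2 ⊢
  exact_mod_cast le_antisymm (by exact_mod_cast h1) (by exact_mod_cast h2)

lemma H_base' : M'.IsBase H := (S.hbase H).mpr (Or.inr rfl)

lemma encard_H : H.encard = r := by
  obtain ⟨B, hB⟩ := M.exists_isBase
  have hB' : M'.IsBase B := (S.hbase B).mpr (Or.inl hB)
  have := S.H_base'.encard_eq_encard_of_isBase hB'
  rw [this]
  exact S.base_encard hB

lemma card_H : H.toFinset.card = r := by
  have := S.encard_H
  rwa [Set.encard_eq_coe_toFinset_card, Nat.cast_inj] at this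

lemma one_le_r : 1 ≤ r := by
  have hne : H.Nonempty := S.hcirc.prop.nonempty
  have := S.card_H
  have : 0 < H.toFinset.card := Finset.card_pos.mpr (by simpa using hne)
  omega

lemma indep'_iff {I : Set (Fin n)} : M'.Indep I ↔ M.Indep I ∨ I = H := by
  constructor
  · intro hI
    obtain ⟨B, hB, hIB⟩ := Matroid.indep_iff.mp hI
    rcases (S.hbase B).mp hB with hB | rfl
    · exact Or.inl (hB.indep.subset hIB)
    · rcases eq_or_ssubset_of_subset hIB with rfl | hss
      · exact Or.inr rfl
      · left
        apply Matroid.indep_of_not_dep _ (by rw [S.hE]; exact Set.subset_univ I)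
        intro hdep
        exact hss.ne (subset_antisymm hss.subset (S.hcirc.le_of_le hdep hss.subset))
  · rintro (hI | rfl)
    · obtain ⟨B, hB, hIB⟩ := Matroid.indep_iff.mp hI
      exact Matroid.indep_iff.mpr ⟨B, (S.hbase B).mpr (Or.inl hB), hIB⟩
    · exact S.H_base'.indep

lemma mrank'_univ : mrank M' Set.univ = r := by
  apply le_antisymm
  · apply Finset.sup_le
    intro I hI
    simp only [Finset.mem_filter, Finset.mem_univ, true_and] at hI
    rcases (S.indep'_iff).mp hI.1 with h | h
    · rw [← S.hr]; exact indep_card_le_mrank h (Set.subset_univ _)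
    · have : I = H.toFinset := by
        apply Finset.coe_injective; rw [Set.coe_toFinset]; exact h
      rw [this, S.card_H]
  · rw [← S.hr]
    apply Finset.sup_le
    intro I hI
    simp only [Finset.mem_filter, Finset.mem_univ, true_and] at hI
    exact indep_card_le_mrank ((S.indep'_iff).mpr (Or.inl hI.1)) (Set.subset_univ _)

end Setup

section
variable {n r : ℕ} {M M' : Matroid (Fin n)} {H : Set (Fin n)} (S : Setup n r M M' H)
include S
namespace Setup

lemma r_le_n : r ≤ n := by
  have := S.card_H
  have h2 := Finset.card_le_univ H.toFinset
  simp only [Finset.card_univ, Fintype.card_fin] at h2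
  omega

lemma r_lt_n : r < n := by
  rcases lt_or_eq_of_le S.r_le_n with h | h
  · exact h
  · exfalso
    obtain ⟨I, hI, -, hIr⟩ := exists_mrank_witness M Set.univ
    rw [S.hr, h] at hIr
    have : I = Finset.univ := Finset.eq_univ_of_card I (by simp [hIr])
    rw [this, Finset.coe_univ] at hI
    have hHuniv : H = Set.univ :=
      Set.toFinset_eq_univ.mp (Finset.eq_univ_of_card _ (by simp [S.card_H, h]))
    exact S.hcirc.prop.not_indep (hHuniv ▸ hI)

lemma mrank_superset {X : Set (Fin n)} (hHX : H ⊆ X) (hne : X ≠ H) : mrank M X = r := by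
  apply le_antisymm
  · rw [← S.hr]; exact mrank_mono M (Set.subset_univ X)
  · obtain ⟨x, hxX, hxH⟩ := Set.exists_of_ssubset (ssubset_of_subset_of_ne hHX (Ne.symm hne))
    obtain ⟨I, hI, hIH, hIr⟩ := exists_mrank_witness M H
    rw [S.hhyp] at hIr
    have hHE : H ⊆ M.E := by rw [S.hE]; exact Set.subset_univ H
    have hbasis : M.IsBasis ↑I H := by
      rw [Matroid.isBasis_iff]
      refine ⟨hI, hIH, fun J hJ hIJ hJH => ?_⟩
      apply (Set.toFinite (↑I : Set (Fin n))).eq_of_subset_of_encard_le hIJ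
      rw [Set.encard_coe_eq_coe_finsetCard, Set.encard_eq_coe_toFinset_card J, Nat.cast_le,
        hIr]
      calc J.toFinset.card ≤ mrank M H :=
            indep_card_le_mrank (by rw [Set.coe_toFinset]; exact hJ)
              (by rw [Set.coe_toFinset]; exact hJH)
        _ = r - 1 := S.hhyp
    have hcl : M.closure ↑I = H := by
      rw [hbasis.closure_eq_closure, S.hflat.closure]
    have hxI : x ∉ (↑I : Set (Fin n)) := fun h => hxH (hIH h)
    have hins : M.Indep (insert x ↑I) := by
      rw [hI.insert_indep_iff]
      exact Or.inl ⟨by rw [S.hE]; trivial, by rw [hcl]; exact hxH⟩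
    have hcard : (insert x I).card = r := by
      rw [Finset.card_insert_of_notMem (by simpa using hxI), hIr]
      have := S.one_le_r; omega
    calc r = (insert x I).card := hcard.symm
      _ ≤ mrank M X := indep_card_le_mrank (by rw [Finset.coe_insert]; exact hins)
          (by rw [Finset.coe_insert]; exact Set.insert_subset hxX (hIH.trans hHX))

lemma mrank_le_mrank' (X : Set (Fin n)) : mrank M X ≤ mrank M' X := by
  apply Finset.sup_le
  intro I hI
  simp only [Finset.mem_filter, Finset.mem_univ, true_and] at hI
  exact indep_card_le_mrank ((S.indep'_iff).mpr (Or.inl hI.1)) hI.2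

lemma mrank'_eq {A : Set (Fin n)} (hA : A ≠ H) : mrank M' A = mrank M A := by
  by_cases hHA : H ⊆ A
  · rw [S.mrank_superset hHA hA]
    apply le_antisymm
    · rw [← S.mrank'_univ]; exact mrank_mono M' (Set.subset_univ A)
    · rw [← S.mrank_superset hHA hA]; exact S.mrank_le_mrank' A
  · apply le_antisymm
    · apply Finset.sup_le
      intro I hI
      simp only [Finset.mem_filter, Finset.mem_univ, true_and] at hI
      rcases (S.indep'_iff).mp hI.1 with h | h
      · exact indep_card_le_mrank h hI.2
      · exact absurd (h ▸ hI.2) hHA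
    · exact S.mrank_le_mrank' A

lemma mrank'_H : mrank M' H = r := by
  apply le_antisymm
  · rw [← S.mrank'_univ]; exact mrank_mono M' (Set.subset_univ H)
  · calc r = H.toFinset.card := S.card_H.symm
      _ ≤ mrank M' H := indep_card_le_mrank
          (by rw [Set.coe_toFinset]; exact ((S.indep'_iff).mpr (Or.inr rfl)))
          (by rw [Set.coe_toFinset])

lemma mrank_proper {A : Finset (Fin n)} (hA : (↑A : Set (Fin n)) ⊂ H) :
    mrank M ↑A = A.card := by
  apply le_antisymm (mrank_coe_le_card M A)
  have hind : M.Indep ↑A := by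
    apply Matroid.indep_of_not_dep _ (by rw [S.hE]; exact Set.subset_univ _)
    intro hdep
    exact hA.ne (subset_antisymm hA.subset (S.hcirc.le_of_le hdep hA.subset))
  exact indep_card_le_mrank hind subset_rfl

end Setup
end


lemma subtypeCongr_apply_pos {α : Type*} {p q : α → Prop} [DecidablePred p] [DecidablePred q]
    (e : { x // p x } ≃ { x // q x }) (f : { x // ¬p x } ≃ { x // ¬q x }) (x : α) (h : p x) :
    Equiv.subtypeCongr e f x = (e ⟨x, h⟩ : { x // q x }) := by
  simp [Equiv.subtypeCongr, h]

lemma subtypeCongr_apply_neg {α : Type*} {p q : α → Prop} [DecidablePred p] [DecidablePred q]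
    (e : { x // p x } ≃ { x // q x }) (f : { x // ¬p x } ≃ { x // ¬q x }) (x : α) (h : ¬p x) :
    Equiv.subtypeCongr e f x = (f ⟨x, h⟩ : { x // ¬q x }) := by
  simp [Equiv.subtypeCongr, h]

lemma image_eq_iff_mem_iff {n : ℕ} (S₀ Hf : Finset (Fin n)) (π : Equiv.Perm (Fin n)) :
    S₀.image ⇑π = Hf ↔ ∀ x, x ∈ S₀ ↔ π x ∈ Hf := by
  constructor
  · intro h x
    constructor
    · intro hx; rw [← h]; exact Finset.mem_image_of_mem _ hx
    · intro hx; rw [← h] at hx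
      obtain ⟨y, hy, hyx⟩ := Finset.mem_image.mp hx
      rwa [← π.injective hyx]
  · intro h
    apply Finset.ext
    intro y
    simp only [Finset.mem_image]
    constructor
    · rintro ⟨x, hx, rfl⟩; exact (h x).mp hx
    · intro hy; exact ⟨π.symm y, (h _).mpr (by simpa using hy), by simp⟩

lemma card_perm_image {n r : ℕ} (S₀ Hf : Finset (Fin n)) (h₀ : S₀.card = r) (hH : Hf.card = r) :
    (Finset.univ.filter fun π : Equiv.Perm (Fin n) => S₀.image ⇑π = Hf).card =
      r.factorial * (n - r).factorial := by
  have E : {π : Equiv.Perm (Fin n) // S₀.image ⇑π = Hf} ≃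
      (({x // x ∈ S₀} ≃ {y // y ∈ Hf}) × ({x : Fin n // ¬ x ∈ S₀} ≃ {y : Fin n // ¬ y ∈ Hf})) :=
    { toFun := fun π => (Equiv.subtypeEquiv π.1 (fun x => (image_eq_iff_mem_iff S₀ Hf π.1).mp π.2 x),
        Equiv.subtypeEquiv π.1 (fun x => not_iff_not.mpr ((image_eq_iff_mem_iff S₀ Hf π.1).mp π.2 x))),
      invFun := fun ef => ⟨Equiv.subtypeCongr ef.1 ef.2, by
        rw [image_eq_iff_mem_iff]
        intro x
        by_cases h : x ∈ S₀
        · simp only [h, true_iff]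
          rw [subtypeCongr_apply_pos ef.1 ef.2 x h]
          exact (ef.1 ⟨x, h⟩).2
        · simp only [h, false_iff]
          rw [subtypeCongr_apply_neg ef.1 ef.2 x h]
          exact (ef.2 ⟨x, h⟩).2⟩,
      left_inv := by
        intro π
        apply Subtype.ext
        apply Equiv.ext
        intro x
        by_cases h : x ∈ S₀
        · rw [subtypeCongr_apply_pos _ _ x h]; rfl
        · rw [subtypeCongr_apply_neg _ _ x h]; rfl,
      right_inv := by
        intro ef
        apply Prod.ext
        · apply Equiv.ext
          intro x
          apply Subtype.ext
          simp only [Equiv.subtypeEquiv_apply]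
          rw [subtypeCongr_apply_pos ef.1 ef.2 x.1 x.2]
        · apply Equiv.ext
          intro x
          apply Subtype.ext
          simp only [Equiv.subtypeEquiv_apply]
          rw [subtypeCongr_apply_neg ef.1 ef.2 x.1 x.2] }
  have h1 : (Finset.univ.filter fun π : Equiv.Perm (Fin n) => S₀.image ⇑π = Hf).card =
      Fintype.card {π : Equiv.Perm (Fin n) // S₀.image ⇑π = Hf} :=
    (Fintype.card_subtype _).symm
  rw [h1, Fintype.card_congr E, Fintype.card_prod]
  have e1 : ({x // x ∈ S₀} ≃ {y // y ∈ Hf}) := Fintype.equivOfCardEq (by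
    simp [Fintype.card_coe, h₀, hH])
  have e2 : ({x : Fin n // ¬ x ∈ S₀} ≃ {y : Fin n // ¬ y ∈ Hf}) := Fintype.equivOfCardEq (by
    simp [Fintype.card_subtype_compl, Fintype.card_coe, h₀, hH])
  rw [Fintype.card_equiv e1, Fintype.card_equiv e2]
  have c1 : Fintype.card {x // x ∈ S₀} = r := by simp [Fintype.card_coe, h₀]
  have c2 : Fintype.card {x : Fin n // ¬ x ∈ S₀} = n - r := by
    rw [Fintype.card_subtype_compl]
    simp [Fintype.card_coe, h₀]
  rw [c1, c2]



lemma filter_lt_card {n : ℕ} {m : ℕ} (h : m ≤ n) :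
    (Finset.univ.filter fun i : Fin n => (i : ℕ) < m).card = m := by
  have : (Finset.univ.filter fun i : Fin n => (i : ℕ) < m) =
      Finset.map (Fin.castLEEmb h) Finset.univ := by
    ext i
    simp only [Finset.mem_filter, Finset.mem_univ, true_and, Finset.mem_map]
    constructor
    · intro hi
      refine ⟨⟨(i : ℕ), hi⟩, ?_⟩
      apply Fin.ext
      simp
    · rintro ⟨a, rfl⟩
      simp
  rw [this, Finset.card_map, Finset.card_univ, Fintype.card_fin]

lemma prefFinset_card {n : ℕ} (π : Equiv.Perm (Fin n)) {m : ℕ} (h : m ≤ n) :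
    (prefFinset π m).card = m := by
  rw [prefFinset, Finset.card_image_of_injective _ π.injective, filter_lt_card h]

lemma prefFinset_mono {n : ℕ} (π : Equiv.Perm (Fin n)) {m m' : ℕ} (h : m ≤ m') :
    prefFinset π m ⊆ prefFinset π m' := by
  intro x hx
  rw [prefFinset, Finset.mem_image] at hx ⊢
  obtain ⟨i, hi, rfl⟩ := hx
  refine ⟨i, ?_, rfl⟩
  simp only [Finset.mem_filter, Finset.mem_univ, true_and] at hi ⊢
  omega

lemma ofFn_eq_append1 {n r : ℕ} (hrn : r ≤ n) (f : Fin n → Bool)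
    (hf : ∀ j : Fin n, f j = decide ((j : ℕ) < r)) :
    List.ofFn f = List.replicate r true ++ List.replicate (n - r) false := by
  apply List.ext_getElem
  · simp; omega
  · intro i h1 h2
    simp only [List.getElem_ofFn]
    rw [hf]
    by_cases hi : i < r
    · rw [List.getElem_append_left (by simpa using hi)]
      simp [hi]
    · rw [List.getElem_append_right (by simpa using hi)]
      simp [hi]

lemma ofFn_eq_append2 {n r : ℕ} (hr1 : 1 ≤ r) (hrn : r < n) (f : Fin n → Bool)
    (hf : ∀ j : Fin n, f j = decide ((j : ℕ) < r - 1 ∨ (j : ℕ) = r)) :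
    List.ofFn f = List.replicate (r - 1) true ++ [false, true] ++
      List.replicate (n - r - 1) false := by
  apply List.ext_getElem
  · simp; omega
  · intro i h1 h2
    simp only [List.getElem_ofFn]
    rw [hf]
    by_cases hi : i < r - 1
    · rw [List.getElem_append_left (by simp; omega), List.getElem_append_left (by simpa using hi)]
      simp [hi]
    · by_cases hi2 : i < r + 1
      · rw [List.getElem_append_left (by simp; omega), List.getElem_append_right (by simpa using hi)]
        have : i - (r - 1) = 0 ∨ i - (r - 1) = 1 := by omega
        rcases this with h | h
        · simp only [List.length_replicate, h]
          simp only [List.getElem_cons_zero]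
          simp only [decide_eq_false_iff_not]
          omega
        · simp only [List.length_replicate, h]
          simp only [List.getElem_cons_succ, List.getElem_cons_zero]
          simp only [decide_eq_true_eq]
          omega
      · rw [List.getElem_append_right (by simp; omega)]
        simp
        omega


section
variable {n r : ℕ} {M M' : Matroid (Fin n)} {H : Set (Fin n)} (S : Setup n r M M' H)
include S
namespace Setup

lemma pref_ne (π : Equiv.Perm (Fin n)) (hπ : prefFinset π r ≠ H.toFinset) {m : ℕ} (hm : m ≤ n) :
    (↑(prefFinset π m) : Set (Fin n)) ≠ H := by
  intro h
  have hmr : m = r := by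
    have h1 : (prefFinset π m).card = m := prefFinset_card π hm
    have h2 : prefFinset π m = H.toFinset := by
      apply Finset.coe_injective
      rw [h, Set.coe_toFinset]
    rw [h2, S.card_H] at h1
    omega
  exact hπ (by
    apply Finset.coe_injective
    rw [← hmr, h, Set.coe_toFinset])

lemma pref_ne_of_card (π : Equiv.Perm (Fin n)) {m : ℕ} (hmn : m ≤ n) (hm : m ≠ r) :
    (↑(prefFinset π m) : Set (Fin n)) ≠ H := by
  intro hcon
  have h1 : (prefFinset π m).card = m := prefFinset_card π hmn
  have h2 : prefFinset π m = H.toFinset := by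
    apply Finset.coe_injective; rw [hcon, Set.coe_toFinset]
  rw [h2, S.card_H] at h1
  omega

lemma rankSeq_eq_of_ne (π : Equiv.Perm (Fin n)) (hπ : prefFinset π r ≠ H.toFinset) :
    rankSeq (fun A : Finset (Fin n) => mrank M' ↑A) π =
      rankSeq (fun A : Finset (Fin n) => mrank M ↑A) π := by
  unfold rankSeq
  congr 1
  funext j
  beta_reduce
  rw [S.mrank'_eq (S.pref_ne π hπ (by omega)), S.mrank'_eq (S.pref_ne π hπ (by omega))]

lemma pref_rank_lt (π : Equiv.Perm (Fin n)) (hπ : prefFinset π r = H.toFinset)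
    {m : ℕ} (hm : m < r) : mrank M (↑(prefFinset π m)) = m := by
  have hmn : m ≤ n := le_trans (le_of_lt hm) S.r_le_n
  have hsub : (↑(prefFinset π m) : Set (Fin n)) ⊂ H := by
    constructor
    · rw [← Set.coe_toFinset H, ← hπ]
      exact_mod_cast prefFinset_mono π (le_of_lt hm)
    · intro hcon
      have h1 : H.toFinset ⊆ prefFinset π m := by
        intro x hx
        exact_mod_cast hcon (by rwa [← Set.mem_toFinset])
      have := Finset.card_le_card h1
      rw [S.card_H, prefFinset_card π hmn] at this
      omega
  rw [S.mrank_proper hsub]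
  exact prefFinset_card π hmn

lemma pref_rank_gt (π : Equiv.Perm (Fin n)) (hπ : prefFinset π r = H.toFinset)
    {m : ℕ} (hm : r < m) (hmn : m ≤ n) : mrank M (↑(prefFinset π m)) = r := by
  apply S.mrank_superset
  · rw [← Set.coe_toFinset H, ← hπ]
    exact_mod_cast prefFinset_mono π (le_of_lt hm)
  · exact S.pref_ne_of_card π hmn (by omega)

lemma pref_rank_eq (π : Equiv.Perm (Fin n)) (hπ : prefFinset π r = H.toFinset) :
    mrank M (↑(prefFinset π r)) = r - 1 := by
  rw [show (↑(prefFinset π r) : Set (Fin n)) = H from by rw [hπ, Set.coe_toFinset]]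
  exact S.hhyp

lemma pref_rank'_eq (π : Equiv.Perm (Fin n)) (hπ : prefFinset π r = H.toFinset) :
    mrank M' (↑(prefFinset π r)) = r := by
  rw [show (↑(prefFinset π r) : Set (Fin n)) = H from by rw [hπ, Set.coe_toFinset]]
  exact S.mrank'_H

lemma pref_rank' (π : Equiv.Perm (Fin n)) (hπ : prefFinset π r = H.toFinset)
    {m : ℕ} (hmn : m ≤ n) : mrank M' (↑(prefFinset π m)) = min m r := by
  rcases lt_trichotomy m r with h | h | h
  · rw [S.mrank'_eq (S.pref_ne_of_card π hmn (by omega)), S.pref_rank_lt π hπ h]; omega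
  · subst h; rw [S.pref_rank'_eq π hπ]; omega
  · rw [S.mrank'_eq (S.pref_ne_of_card π hmn (by omega)), S.pref_rank_gt π hπ h hmn]; omega

lemma rankSeq'_of_eq (π : Equiv.Perm (Fin n)) (hπ : prefFinset π r = H.toFinset) :
    rankSeq (fun A : Finset (Fin n) => mrank M' ↑A) π =
      List.replicate r true ++ List.replicate (n - r) false := by
  apply ofFn_eq_append1 S.r_le_n
  intro j
  beta_reduce
  rw [S.pref_rank' π hπ (by omega), S.pref_rank' π hπ (by omega)]
  rw [decide_eq_decide]
  omega

lemma rankSeq_of_eq (π : Equiv.Perm (Fin n)) (hπ : prefFinset π r = H.toFinset) :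
    rankSeq (fun A : Finset (Fin n) => mrank M ↑A) π =
      List.replicate (r - 1) true ++ [false, true] ++ List.replicate (n - r - 1) false := by
  apply ofFn_eq_append2 S.one_le_r S.r_lt_n
  intro j
  have hj : (j : ℕ) < n := j.isLt
  have h1r := S.one_le_r
  beta_reduce
  rcases lt_trichotomy ((j : ℕ) + 1) r with h | h | h
  · rw [S.pref_rank_lt π hπ h, S.pref_rank_lt π hπ (by omega), decide_eq_decide]
    omega
  · rw [h, S.pref_rank_eq π hπ, S.pref_rank_lt π hπ (by omega), decide_eq_decide]
    omega
  · rcases Nat.lt_or_ge (j : ℕ) r with h2 | h2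
    · have hjr : (j : ℕ) = r := by omega
      rw [S.pref_rank_gt π hπ h (by omega), hjr, S.pref_rank_eq π hπ, decide_eq_decide]
      omega
    · rcases Nat.eq_or_lt_of_le h2 with h3 | h3
      · rw [S.pref_rank_gt π hπ h (by omega), ← h3, S.pref_rank_eq π hπ, decide_eq_decide]
        omega
      · rw [S.pref_rank_gt π hπ h (by omega), S.pref_rank_gt π hπ h3 (by omega),
          decide_eq_decide]
        omega

end Setup
end


/-- If `M′` is obtained from an `(n,r)`-matroid `M` by relaxing a
circuit-hyperplane `H`, then `G(M′) − G(M) = r!(n−r)!([1^r 0^{n−r}] − [1^{r−1} 0 1 0^{n−r−1}])`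
and `T(M′) − T(M) = x + y − xy`. -/
theorem relaxation_ginv_tutte (K : Type*) [Field K] (n r : ℕ) (M M' : Matroid (Fin n))
    (hE : M.E = Set.univ) (hr : mrank M Set.univ = r) (H : Set (Fin n))
    (hcirc : Minimal M.Dep H) (hflat : M.IsFlat H) (hhyp : mrank M H = r - 1)
    (hE' : M'.E = Set.univ)
    (hbase : ∀ B : Set (Fin n), M'.IsBase B ↔ M.IsBase B ∨ B = H) :
    Ginv K (fun A : Finset (Fin n) => mrank M' ↑A) -
        Ginv K (fun A : Finset (Fin n) => mrank M ↑A) =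
      ((r.factorial * (n - r).factorial : ℕ) : K) •
        (Finsupp.single (List.replicate r true ++ List.replicate (n - r) false) 1 -
          Finsupp.single
            (List.replicate (r - 1) true ++ [false, true] ++
              List.replicate (n - r - 1) false) 1) ∧
    tutte K r (fun A : Finset (Fin n) => mrank M' ↑A) -
        tutte K r (fun A : Finset (Fin n) => mrank M ↑A) =
      X 0 + X 1 - X 0 * X 1 := by
  
  have S : Setup n r M M' H := ⟨hE, hr, hcirc, hflat, hhyp, hE', hbase⟩
  constructor
  · rw [Ginv, Ginv, ← Finset.sum_sub_distrib,
      ← Finset.sum_filter_add_sum_filter_not Finset.univ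
        (fun π : Equiv.Perm (Fin n) => prefFinset π r = H.toFinset)]
    have h2 : ∀ π ∈ Finset.univ.filter
        (fun π : Equiv.Perm (Fin n) => ¬ prefFinset π r = H.toFinset),
        (Finsupp.single (rankSeq (fun A : Finset (Fin n) => mrank M' ↑A) π) (1:K) -
         Finsupp.single (rankSeq (fun A : Finset (Fin n) => mrank M ↑A) π) 1) = 0 := by
      intro π hπ
      simp only [Finset.mem_filter] at hπ
      rw [S.rankSeq_eq_of_ne π hπ.2, sub_self]
    have h1 : ∀ π ∈ Finset.univ.filter
        (fun π : Equiv.Perm (Fin n) => prefFinset π r = H.toFinset),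
        (Finsupp.single (rankSeq (fun A : Finset (Fin n) => mrank M' ↑A) π) (1:K) -
         Finsupp.single (rankSeq (fun A : Finset (Fin n) => mrank M ↑A) π) 1) =
        (Finsupp.single (List.replicate r true ++ List.replicate (n-r) false) (1:K) -
         Finsupp.single (List.replicate (r-1) true ++ [false,true] ++
           List.replicate (n-r-1) false) 1) := by
      intro π hπ
      simp only [Finset.mem_filter] at hπ
      rw [S.rankSeq'_of_eq π hπ.2, S.rankSeq_of_eq π hπ.2]
    rw [Finset.sum_congr rfl h2, Finset.sum_const_zero, add_zero,
      Finset.sum_congr rfl h1, Finset.sum_const]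
    have hcard : (Finset.univ.filter fun π : Equiv.Perm (Fin n) =>
        prefFinset π r = H.toFinset).card = r.factorial * (n-r).factorial :=
      card_perm_image (Finset.univ.filter fun i : Fin n => (i:ℕ) < r) H.toFinset
        (filter_lt_card S.r_le_n) S.card_H
    rw [hcard]
    exact (Nat.cast_smul_eq_nsmul K _ _).symm
  · rw [tutte, tutte, ← Finset.sum_sub_distrib, Finset.sum_eq_single H.toFinset]
    · have e1 : mrank M' ↑H.toFinset = r := by rw [Set.coe_toFinset]; exact S.mrank'_H
      have e2 : mrank M ↑H.toFinset = r - 1 := by rw [Set.coe_toFinset]; exact S.hhyp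
      have h1r := S.one_le_r
      rw [e1, e2, S.card_H, show r - r = 0 from by omega, show r - (r-1) = 1 from by omega]
      ring
    · intro A _ hA
      have hne : (↑A : Set (Fin n)) ≠ H := by
        intro hc; exact hA (by apply Finset.coe_injective; rw [hc, Set.coe_toFinset])
      rw [S.mrank'_eq hne, sub_self]
    · intro h; exact absurd (Finset.mem_univ _) h
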